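/- arXiv:1606.08216 — 2 statements merged into one kernel-verified Lean document; each statement's English description precedes it below -/
import Mathlib

section
/- Let E be a uniformly convex real Banach space with a partial order ≤ induced by a closed convex cone P, and let T : P → P be a monotone α-nonexpansive mapping for some α < 1 that has at least one fixed point. If the norm is monotonic (‖x‖ ≤ ‖y‖ whenever 0 ≤ x ≤ y), then the sequence Tⁿ0 converges strongly (in norm) to a fixed point z of T. -/
open Filter Topology

/-- A closed convex cone in a real normed space: nonempty, closed, not `{0}`,
pointed (`P ∩ (−P) = {0}`), and closed under nonnegative linear combinations. -/
def IsClosedConvexCone {E : Type*} [NormedAddCommGroup E] [NormedSpace ℝ E]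
    (P : Set E) : Prop :=
  P.Nonempty ∧ IsClosed P ∧ P ≠ {0} ∧ P ∩ (-P) = {0} ∧
    ∀ x ∈ P, ∀ y ∈ P, ∀ a b : ℝ, 0 ≤ a → 0 ≤ b → a • x + b • y ∈ P

/-- Weak convergence of a sequence: `f (x n) → f l` for every continuous
linear functional `f`. -/
def WeakConv {E : Type*} [NormedAddCommGroup E] [NormedSpace ℝ E]
    (x : ℕ → E) (l : E) : Prop :=
  ∀ f : E →L[ℝ] ℝ, Tendsto (fun n => f (x n)) atTop (𝓝 (f l))

/-- `T` is monotone (w.r.t. the order `x ≤ y ↔ y - x ∈ P`) and α-nonexpansive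
on `K`. -/
def MonotoneAlphaNonexpansive {E : Type*} [NormedAddCommGroup E] [NormedSpace ℝ E]
    (P K : Set E) (T : E → E) (α : ℝ) : Prop :=
  (∀ x ∈ K, ∀ y ∈ K, y - x ∈ P → T y - T x ∈ P) ∧
    ∀ x ∈ K, ∀ y ∈ K, y - x ∈ P →
      ‖T x - T y‖ ^ 2 ≤ α * ‖T x - y‖ ^ 2 + α * ‖T y - x‖ ^ 2
        + (1 - 2 * α) * ‖x - y‖ ^ 2

/-- If a monotone α-nonexpansive self-map of the cone `P` has a fixed point
and the norm is monotonic, then the Picard iterates of `0` converge strongly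
to a fixed point of `T`. -/
theorem picard_strong_convergence_from_zero
    {E : Type*} [NormedAddCommGroup E] [NormedSpace ℝ E]
    [UniformConvexSpace E] [CompleteSpace E]
    (P : Set E) (hP : IsClosedConvexCone P)
    (T : E → E) (hTP : ∀ x ∈ P, T x ∈ P)
    (α : ℝ) (hα : α < 1)
    (hT : MonotoneAlphaNonexpansive P P T α)
    (hfix : ∃ p ∈ P, T p = p)
    (hnorm : ∀ x y : E, x ∈ P → y - x ∈ P → ‖x‖ ≤ ‖y‖) :
    ∃ z ∈ P, T z = z ∧ Tendsto (fun n => T^[n] (0 : E)) atTop (𝓝 z) := by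
  classical
  obtain ⟨p, hpP, hTp⟩ := hfix
  obtain ⟨hmonoT, hnexp⟩ := hT
  obtain ⟨⟨w, hw⟩, hclosed, -, -, hcone⟩ := hP
  have h0P : (0 : E) ∈ P := by
    simpa using hcone w hw w hw 0 0 le_rfl le_rfl
  have hadd : ∀ u ∈ P, ∀ v ∈ P, u + v ∈ P := fun u hu v hv => by
    simpa using hcone u hu v hv 1 1 zero_le_one zero_le_one
  set x : ℕ → E := fun n => T^[n] (0 : E) with hxdef
  have hx0 : x 0 = 0 := rfl
  have hxsucc : ∀ n, x (n + 1) = T (x n) := fun n => Function.iterate_succ_apply' T n 0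
  have hxP : ∀ n, x n ∈ P := by
    intro n; induction n with
    | zero => simpa [hx0] using h0P
    | succ n ih => rw [hxsucc]; exact hTP _ ih
  have hstep : ∀ n, x (n + 1) - x n ∈ P := by
    intro n; induction n with
    | zero => rw [hxsucc, hx0, sub_zero]; exact hTP 0 h0P
    | succ n ih =>
      have h1 := hmonoT (x n) (hxP n) (x (n + 1)) (hxP (n + 1)) ih
      rw [← hxsucc (n + 1), ← hxsucc n] at h1
      exact h1
  have hle : ∀ n m, n ≤ m → x m - x n ∈ P := by
    intro n m hnm
    induction hnm with
    | refl => simpa using h0P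
    | step _ ih =>
      rename_i k _
      have h2 : x (k + 1) - x n = (x (k + 1) - x k) + (x k - x n) := by abel
      rw [h2]; exact hadd _ (hstep k) _ ih
  have hpx : ∀ n, p - x n ∈ P := by
    intro n; induction n with
    | zero => simpa [hx0] using hpP
    | succ n ih =>
      have h1 := hmonoT (x n) (hxP n) p hpP ih
      rw [hTp, ← hxsucc n] at h1
      exact h1
  set a : ℕ → ℝ := fun n => ‖p - x n‖ with hadef
  have hadec : ∀ n, a (n + 1) ≤ a n := by
    intro n
    have key := hnexp (x n) (hxP n) p hpP (hpx n)
    rw [hTp] at key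
    have hA : a (n + 1) = ‖T (x n) - p‖ := by
      show ‖p - x (n + 1)‖ = _
      rw [hxsucc, norm_sub_rev]
    have hB : ‖x n - p‖ = a n := by
      show _ = ‖p - x n‖
      rw [norm_sub_rev]
    rw [hA, ← hB]
    rw [norm_sub_rev p (x n)] at key
    have hAB : ‖T (x n) - p‖ ^ 2 ≤ ‖x n - p‖ ^ 2 := by
      have h1 : (1 - α) * ‖T (x n) - p‖ ^ 2 ≤ (1 - α) * ‖x n - p‖ ^ 2 := by linarith
      exact le_of_mul_le_mul_left h1 (by linarith)
    nlinarith [hAB, norm_nonneg (T (x n) - p), norm_nonneg (x n - p)]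
  have hanti : Antitone a := antitone_nat_of_succ_le hadec
  have hbdd : BddBelow (Set.range a) := ⟨0, fun r ⟨n, hn⟩ => hn ▸ norm_nonneg _⟩
  set d : ℝ := ⨅ n, a n with hddef
  have hdle : ∀ n, d ≤ a n := fun n => ciInf_le hbdd n
  have hd0 : 0 ≤ d := le_ciInf fun n => norm_nonneg _
  have htend : Tendsto a atTop (𝓝 d) := tendsto_atTop_ciInf hanti hbdd
  have hbound : ∀ n m, n ≤ m → ‖x m - x n‖ ≤ a n := by
    intro n m h
    refine hnorm (x m - x n) (p - x n) (hle n m h) ?_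
    have h2 : (p - x n) - (x m - x n) = p - x m := by abel
    rw [h2]; exact hpx m
  have hcauchy : CauchySeq x := by
    rw [Metric.cauchySeq_iff']
    intro ε hε
    rcases eq_or_lt_of_le hd0 with hdz | hdpos
    · obtain ⟨N, hN⟩ := (htend.eventually_lt_const (hdz ▸ hε : d < ε)).exists
      refine ⟨N, fun n hn => ?_⟩
      rw [dist_eq_norm]
      exact (hbound N n hn).trans_lt hN
    · have ha0pos : 0 < a 0 := lt_of_lt_of_le hdpos (hdle 0)
      obtain ⟨δ, hδ, hball⟩ :=
        exists_forall_closed_ball_dist_add_le_two_sub E (div_pos hε ha0pos)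
      have h2d : (2 - δ) * d < 2 * d := by nlinarith
      obtain ⟨N, hN⟩ := ((htend.const_mul (2 - δ)).eventually_lt_const h2d).exists
      refine ⟨N, fun n hn => ?_⟩
      by_contra hcon
      push_neg at hcon
      rw [dist_eq_norm] at hcon
      have hR : 0 < a N := lt_of_lt_of_le hdpos (hdle N)
      set u : E := (a N)⁻¹ • (p - x N) with hudef
      set v : E := (a N)⁻¹ • (p - x n) with hvdef
      have hnormN : ‖p - x N‖ = a N := rfl
      have hnormn : ‖p - x n‖ = a n := rfl
      have hu1 : ‖u‖ ≤ 1 := by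
        rw [hudef, norm_smul, Real.norm_eq_abs, abs_of_pos (inv_pos.2 hR), hnormN,
          inv_mul_cancel₀ hR.ne']
      have hv1 : ‖v‖ ≤ 1 := by
        rw [hvdef, norm_smul, Real.norm_eq_abs, abs_of_pos (inv_pos.2 hR), hnormn,
          inv_mul_le_iff₀ hR, mul_one]
        exact hanti hn
      have huv : ε / a 0 ≤ ‖u - v‖ := by
        have h1 : u - v = (a N)⁻¹ • (x n - x N) := by
          rw [hudef, hvdef, ← smul_sub]; congr 1; abel
        rw [h1, norm_smul, Real.norm_eq_abs, abs_of_pos (inv_pos.2 hR)]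
        calc ε / a 0 ≤ ε / a N := by
              gcongr
              exact hanti (Nat.zero_le N)
          _ ≤ ‖x n - x N‖ / a N := by gcongr
          _ = (a N)⁻¹ * ‖x n - x N‖ := by rw [div_eq_inv_mul]
      have hsum : ‖u + v‖ ≤ 2 - δ := hball hu1 hv1 huv
      have hsum2 : ‖(p - x N) + (p - x n)‖ ≤ (2 - δ) * a N := by
        have h1 : (p - x N) + (p - x n) = (a N) • (u + v) := by
          rw [hudef, hvdef, ← smul_add, smul_smul, mul_inv_cancel₀ hR.ne', one_smul]
        rw [h1, norm_smul, Real.norm_eq_abs, abs_of_pos hR, mul_comm]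
        exact mul_le_mul_of_nonneg_right hsum hR.le
      have hlow : 2 * a n ≤ ‖(p - x N) + (p - x n)‖ := by
        have h1 : 2 * a n = ‖(p - x n) + (p - x n)‖ := by
          rw [← two_smul ℝ (p - x n), norm_smul, Real.norm_eq_abs, hnormn]
          norm_num
        rw [h1]
        refine hnorm _ _ (hadd _ (hpx n) _ (hpx n)) ?_
        have h2 : ((p - x N) + (p - x n)) - ((p - x n) + (p - x n)) = x n - x N := by abel
        rw [h2]; exact hle N n hn
      have hdn := hdle n
      linarith
  obtain ⟨z, hz⟩ := cauchySeq_tendsto_of_complete hcauchy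
  have hzP : z ∈ P := hclosed.mem_of_tendsto hz (Filter.Eventually.of_forall hxP)
  have hzx : ∀ n, z - x n ∈ P := by
    intro n
    refine hclosed.mem_of_tendsto (hz.sub_const (x n)) ?_
    filter_upwards [eventually_ge_atTop n] with m hm
    exact hle n m hm
  have hz1 : Tendsto (fun n => x (n + 1)) atTop (𝓝 z) :=
    hz.comp (tendsto_add_atTop_nat 1)
  have hfixz : T z = z := by
    have hlim1 : Tendsto (fun n => ‖x (n + 1) - T z‖ ^ 2) atTop (𝓝 (‖z - T z‖ ^ 2)) :=
      (hz1.sub_const (T z)).norm.pow 2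
    have hlim2 : Tendsto
        (fun n => α * ‖x (n + 1) - z‖ ^ 2 + α * ‖T z - x n‖ ^ 2 + (1 - 2 * α) * ‖x n - z‖ ^ 2)
        atTop (𝓝 (α * ‖z - z‖ ^ 2 + α * ‖T z - z‖ ^ 2 + (1 - 2 * α) * ‖z - z‖ ^ 2)) := by
      refine Tendsto.add (Tendsto.add ?_ ?_) ?_
      · exact ((hz1.sub_const z).norm.pow 2).const_mul α
      · exact ((tendsto_const_nhds.sub hz).norm.pow 2).const_mul α
      · exact ((hz.sub_const z).norm.pow 2).const_mul _
    have hineq : ∀ n, ‖x (n + 1) - T z‖ ^ 2 ≤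
        α * ‖x (n + 1) - z‖ ^ 2 + α * ‖T z - x n‖ ^ 2 + (1 - 2 * α) * ‖x n - z‖ ^ 2 := by
      intro n
      have h1 := hnexp (x n) (hxP n) z hzP (hzx n)
      rw [← hxsucc] at h1
      exact h1
    have hfin : ‖z - T z‖ ^ 2 ≤
        α * ‖z - z‖ ^ 2 + α * ‖T z - z‖ ^ 2 + (1 - 2 * α) * ‖z - z‖ ^ 2 :=
      le_of_tendsto_of_tendsto' hlim1 hlim2 hineq
    simp only [sub_self, norm_zero, norm_sub_rev (T z) z] at hfin
    norm_num at hfin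
    have hsq : ‖z - T z‖ ^ 2 ≤ 0 := by
      have h1 : (1 - α) * ‖z - T z‖ ^ 2 ≤ (1 - α) * 0 := by rw [mul_zero]; linarith
      exact le_of_mul_le_mul_left h1 (by linarith)
    have h2 : ‖z - T z‖ ^ 2 = 0 := le_antisymm hsq (sq_nonneg _)
    have hz0 : ‖z - T z‖ = 0 := sq_eq_zero_iff.mp h2
    have := sub_eq_zero.mp (norm_eq_zero.mp hz0)
    exact this.symm
  exact ⟨z, hzP, hfixz, hz⟩
end

section
/- Let E be a uniformly convex real Banach space with a partial order ≤ induced by a closed convex cone P, and let T : P → P be a monotone nonexpansive mapping that has at least one fixed point. If the norm is monotonic (‖x‖ ≤ ‖y‖ whenever 0 ≤ x ≤ y), then for every x ∈ P with x ≤ Tx, the sequence Tⁿx converges strongly (in norm) to a fixed point z of T. -/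
open Filter Topology

theorem picard_aux
    {E : Type*} [NormedAddCommGroup E] [NormedSpace ℝ E]
    [UniformConvexSpace E] [CompleteSpace E]
    (P : Set E)
    (hPclosed : IsClosed P)
    (hPcone : ∀ x ∈ P, ∀ y ∈ P, ∀ a b : ℝ, 0 ≤ a → 0 ≤ b → a • x + b • y ∈ P)
    (hP0 : (0:E) ∈ P)
    (T : E → E) (hTP : ∀ x ∈ P, T x ∈ P)
    (hmono : ∀ x ∈ P, ∀ y ∈ P, y - x ∈ P → T y - T x ∈ P)
    (hne : ∀ x ∈ P, ∀ y ∈ P, y - x ∈ P → ‖T x - T y‖ ≤ ‖x - y‖)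
    (hfix : ∃ p ∈ P, T p = p)
    (hnorm : ∀ x y : E, x ∈ P → y - x ∈ P → ‖x‖ ≤ ‖y‖) :
    ∀ x ∈ P, T x - x ∈ P →
      ∃ z ∈ P, T z = z ∧ Tendsto (fun n => T^[n] x) atTop (𝓝 z) := by
  obtain ⟨p, hpP, hpfix⟩ := hfix
  have hadd : ∀ u ∈ P, ∀ v ∈ P, u + v ∈ P := fun u hu v hv => by
    simpa using hPcone u hu v hv 1 1 zero_le_one zero_le_one
  have hhalf : ∀ u ∈ P, (1/2 : ℝ) • u ∈ P := fun u hu => by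
    simpa using hPcone u hu u hu (1/2) 0 (by norm_num) le_rfl
  intro x hxP hxT
  set s : ℕ → E := fun n => T^[n] x with hs
  have hs0 : s 0 = x := rfl
  have hssucc : ∀ n, s (n + 1) = T (s n) := fun n => Function.iterate_succ_apply' T n x
  have hsP : ∀ n, s n ∈ P := by
    intro n; induction n with
    | zero => exact hxP
    | succ n ih => rw [hssucc]; exact hTP _ ih
  have hstep : ∀ n, s (n + 1) - s n ∈ P := by
    intro n; induction n with
    | zero => simpa [hssucc, hs0] using hxT
    | succ n ih =>
      have ih' := ih
      rw [hssucc n] at ih'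
      rw [hssucc (n+1), hssucc n]
      exact hmono _ (hsP n) _ (hTP _ (hsP n)) ih'
  have hchain : ∀ n m, n ≤ m → s m - s n ∈ P := by
    intro n m hnm
    induction m with
    | zero => simpa [Nat.le_zero.mp hnm] using hP0
    | succ m ih =>
      rcases Nat.lt_or_ge n (m+1) with h | h
      · have h' : n ≤ m := Nat.lt_succ_iff.mp h
        have := hadd _ (hstep m) _ (ih h')
        simpa [sub_add_sub_cancel] using this
      · have : n = m + 1 := le_antisymm hnm h
        simpa [this] using hP0
  -- the auxiliary sequence T^[n] 0
  set w : ℕ → E := fun n => T^[n] 0 with hw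
  have hwP : ∀ n, w n ∈ P := by
    intro n; induction n with
    | zero => exact hP0
    | succ n ih =>
      rw [show w (n+1) = T (w n) from Function.iterate_succ_apply' T n 0]
      exact hTP _ ih
  have hws : ∀ n, s n - w n ∈ P ∧ ‖s n - w n‖ ≤ ‖x‖ := by
    intro n; induction n with
    | zero => constructor <;> simp [hs0, hw, hxP]
    | succ n ih =>
      rw [hssucc, show w (n+1) = T (w n) from Function.iterate_succ_apply' T n 0]
      refine ⟨hmono _ (hwP n) _ (hsP n) ih.1, ?_⟩
      calc ‖T (s n) - T (w n)‖ = ‖T (w n) - T (s n)‖ := norm_sub_rev _ _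
        _ ≤ ‖w n - s n‖ := hne _ (hwP n) _ (hsP n) ih.1
        _ = ‖s n - w n‖ := norm_sub_rev _ _
        _ ≤ ‖x‖ := ih.2
  have hwp : ∀ n, p - w n ∈ P ∧ ‖w n‖ ≤ ‖p‖ := by
    intro n; induction n with
    | zero => constructor <;> simp [hw, hpP]
    | succ n ih =>
      rw [show w (n+1) = T (w n) from Function.iterate_succ_apply' T n 0]
      have h1 : p - T (w n) ∈ P := by
        have := hmono _ (hwP n) _ hpP ih.1
        rwa [hpfix] at this
      exact ⟨h1, hnorm _ _ (hTP _ (hwP n)) h1⟩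
  -- boundedness
  set M : ℝ := ‖x‖ + ‖p‖ with hM
  have hM0 : 0 ≤ M := by rw [hM]; positivity
  have hbound : ∀ n, ‖s n - x‖ ≤ M := by
    intro n
    have h1 : ‖s n - x‖ ≤ ‖s n‖ := by
      refine hnorm _ _ (hchain 0 n (Nat.zero_le n)) ?_
      simpa [hs0] using hxP
    have h2 : ‖s n‖ ≤ ‖s n - w n‖ + ‖w n‖ := by
      simpa using norm_add_le (s n - w n) (w n)
    have h3 := (hws n).2
    have h4 := (hwp n).2
    rw [hM]; linarith
  -- a n = ‖s n - x‖
  set a : ℕ → ℝ := fun n => ‖s n - x‖ with ha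
  have haBdd : BddAbove (Set.range a) := ⟨M, by rintro r ⟨n, rfl⟩; exact hbound n⟩
  set L : ℝ := ⨆ n, a n with hL
  have haL : ∀ n, a n ≤ L := fun n => le_ciSup haBdd n
  have hL0 : 0 ≤ L := le_trans (norm_nonneg _) (haL 0)
  have hLM : L ≤ M := ciSup_le hbound
  have haval : ∀ n, a n = ‖s n - x‖ := fun n => by rw [ha]
  clear_value s w M a L
  -- Cauchy
  have hcauchy : CauchySeq s := by
    rw [Metric.cauchySeq_iff']
    intro ε hε
    rcases eq_or_lt_of_le hL0 with hLz | hLpos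
    · refine ⟨0, fun n _ => ?_⟩
      have h1 : ‖s n - x‖ ≤ 0 := (haval n) ▸ ((haL n).trans hLz.ge)
      have h2 : s n = x := by
        have := le_antisymm h1 (norm_nonneg _)
        simp only [norm_eq_zero, sub_eq_zero] at this
        exact this
      simp [dist_eq_norm, h2, hs0, hε]
    · obtain ⟨δ₀, hδ₀, huc⟩ :=
        exists_forall_closed_ball_dist_add_le_two_sub E
          (show (0:ℝ) < ε / (M + 1) from div_pos hε (by linarith))
      set δ : ℝ := min δ₀ 1 with hδdef
      have hδpos : 0 < δ := lt_min hδ₀ one_pos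
      have hδ1 : δ ≤ 1 := min_le_right _ _
      have hδδ₀ : δ ≤ δ₀ := min_le_left _ _
      clear_value δ
      set R : ℝ := L + min 1 (L * δ / 4) with hR
      have hminpos : 0 < min 1 (L * δ / 4) := lt_min one_pos (by positivity)
      have hRpos : 0 < R := by rw [hR]; linarith
      have hRM : R ≤ M + 1 := by
        rw [hR]; have := min_le_left 1 (L * δ / 4); linarith
      have hRL : L ≤ R := by rw [hR]; linarith
      have hRup : R ≤ L + L * δ / 4 := by
        rw [hR]; have := min_le_right 1 (L * δ / 4); linarith
      clear_value R
      have hlt : L * (1 - δ/4) < L := by nlinarith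
      obtain ⟨N, hN⟩ : ∃ N, L * (1 - δ/4) < a N := by
        obtain ⟨N, hN⟩ := exists_lt_of_lt_ciSup (show L * (1 - δ/4) < ⨆ n, a n from hL ▸ hlt)
        exact ⟨N, hN⟩
      refine ⟨N, fun m hm => ?_⟩
      rw [dist_eq_norm]
      by_contra hcon
      push_neg at hcon
      have hRinv : 0 ≤ R⁻¹ := inv_nonneg.2 hRpos.le
      have hu : ‖R⁻¹ • (s m - x)‖ ≤ 1 := by
        rw [norm_smul_of_nonneg hRinv, inv_mul_le_iff₀ hRpos, mul_one]
        exact (haval m) ▸ ((haL m).trans hRL)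
      have hv : ‖R⁻¹ • (s N - x)‖ ≤ 1 := by
        rw [norm_smul_of_nonneg hRinv, inv_mul_le_iff₀ hRpos, mul_one]
        exact (haval N) ▸ ((haL N).trans hRL)
      have huv : ε / (M + 1) ≤ ‖R⁻¹ • (s m - x) - R⁻¹ • (s N - x)‖ := by
        rw [← smul_sub, sub_sub_sub_cancel_right, norm_smul_of_nonneg hRinv]
        calc ε / (M + 1) ≤ ε / R := by
              apply div_le_div_of_nonneg_left hε.le hRpos hRM
          _ ≤ ‖s m - s N‖ / R := by gcongr
          _ = R⁻¹ * ‖s m - s N‖ := by rw [div_eq_inv_mul]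
      have key : ‖R⁻¹ • (s m - x) + R⁻¹ • (s N - x)‖ ≤ 2 - δ :=
        (huc hu hv huv).trans (by linarith)
      have h2 : ‖(s m - x) + (s N - x)‖ ≤ R * (2 - δ) := by
        rw [← smul_add, norm_smul_of_nonneg hRinv, inv_mul_le_iff₀ hRpos] at key
        linarith [key]
      have hmem1 : (1/2 : ℝ) • ((s m - x) + (s N - x)) - (s N - x) ∈ P := by
        have hEq : (1/2 : ℝ) • ((s m - x) + (s N - x)) - (s N - x)
            = (1/2 : ℝ) • (s m - s N) := by module
        rw [hEq]; exact hhalf _ (hchain N m hm)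
      have hmem2 : s N - x ∈ P := by
        have := hchain 0 N (Nat.zero_le N); rwa [hs0] at this
      have h3 : a N ≤ ‖(1/2 : ℝ) • ((s m - x) + (s N - x))‖ := by
        rw [haval N]; exact hnorm _ _ hmem2 hmem1
      have h4 : ‖(1/2 : ℝ) • ((s m - x) + (s N - x))‖ ≤ R * (2 - δ) / 2 := by
        rw [norm_smul_of_nonneg (by norm_num : (0:ℝ) ≤ 1/2)]
        linarith [h2]
      have hprod : R * (2 - δ) ≤ (L + L * δ / 4) * (2 - δ) :=
        mul_le_mul_of_nonneg_right hRup (by linarith)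
      have hfin : R * (2 - δ) / 2 ≤ L * (1 - δ/4) := by
        linarith only [hprod, mul_nonneg (mul_nonneg hL0 hδpos.le) hδpos.le]
      linarith only [hN, h3, h4, hfin]
  -- limit
  obtain ⟨z, hz⟩ := cauchySeq_tendsto_of_complete hcauchy
  have hzP : z ∈ P := hPclosed.mem_of_tendsto hz (Eventually.of_forall hsP)
  have hzn : ∀ n, z - s n ∈ P := by
    intro n
    refine hPclosed.mem_of_tendsto (hz.sub_const (s n)) ?_
    exact eventually_atTop.2 ⟨n, fun m hm => hchain n m hm⟩
  have hdist : ∀ n, dist (T (s n)) (T z) ≤ dist (s n) z := by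
    intro n
    rw [dist_eq_norm, dist_eq_norm]
    exact hne _ (hsP n) _ hzP (hzn n)
  have hTz : Tendsto (fun n => T (s n)) atTop (𝓝 (T z)) := by
    refine tendsto_iff_dist_tendsto_zero.mpr ?_
    refine squeeze_zero (fun n => dist_nonneg) hdist ?_
    exact tendsto_iff_dist_tendsto_zero.mp hz
  have hTz' : Tendsto (fun n => T (s n)) atTop (𝓝 z) := by
    have h1 : Tendsto (fun n => s (n + 1)) atTop (𝓝 z) :=
      hz.comp (tendsto_add_atTop_nat 1)
    simpa only [hssucc] using h1
  exact ⟨z, hzP, tendsto_nhds_unique hTz hTz', hz⟩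

/-- If a monotone nonexpansive self-map of the cone `P` has a fixed point and
the norm is monotonic, then for every `x ∈ P` with `x ≤ T x` the Picard
iterates of `x` converge strongly to a fixed point of `T`. -/
theorem picard_strong_convergence_monotone_nonexpansive
    {E : Type*} [NormedAddCommGroup E] [NormedSpace ℝ E]
    [UniformConvexSpace E] [CompleteSpace E]
    (P : Set E) (hP : IsClosedConvexCone P)
    (T : E → E) (hTP : ∀ x ∈ P, T x ∈ P)
    (hmono : ∀ x ∈ P, ∀ y ∈ P, y - x ∈ P → T y - T x ∈ P)
    (hne : ∀ x ∈ P, ∀ y ∈ P, y - x ∈ P → ‖T x - T y‖ ≤ ‖x - y‖)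
    (hfix : ∃ p ∈ P, T p = p)
    (hnorm : ∀ x y : E, x ∈ P → y - x ∈ P → ‖x‖ ≤ ‖y‖) :
    ∀ x ∈ P, T x - x ∈ P →
      ∃ z ∈ P, T z = z ∧ Tendsto (fun n => T^[n] x) atTop (𝓝 z) := by
  obtain ⟨hne0, hcl, hne1, hpt, hcone⟩ := hP
  have h0 : (0:E) ∈ P := by
    have : (0:E) ∈ P ∩ (-P) := by rw [hpt]; exact Set.mem_singleton _
    exact this.1
  exact picard_aux P hcl hcone h0 T hTP hmono hne hfix hnorm
end
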